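/- Let Λ = e^{Ah}, Θ = e^{-AΔ} - I, and F_Δ = [[-ΛΘ, -ΛΘ],[Λ(I+Θ), Λ(I+Θ)]] ∈ ℝ^{2n×2n}. With T = [[-Θ, -I],[I+Θ, I]], the similarity transform satisfies T^{-1} F_Δ T = [[Λ, 0],[0, 0]]. In particular the eigenvalues of F_Δ are those of e^{Ah} together with n zeros. -/

import Mathlib

open Matrix Polynomial

private lemma charpoly_conj_aux {m : Type*} [Fintype m] [DecidableEq m]
    (T S F : Matrix m m ℝ) (h1 : T * S = 1) (h2 : S * T = 1) :
    (S * F * T).charpoly = F.charpoly := by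
  have hmapST : (S.map (C : ℝ →+* ℝ[X])) * (T.map (C : ℝ →+* ℝ[X])) = 1 := by
    rw [← Matrix.map_mul, h2, Matrix.map_one _ (map_zero _) (map_one _)]
  have hkey : charmatrix (S * F * T) =
      S.map (C : ℝ →+* ℝ[X]) * charmatrix F * T.map (C : ℝ →+* ℝ[X]) := by
    rw [charmatrix, charmatrix]
    rw [mul_sub, sub_mul]
    congr 1
    · have hc : Commute (Matrix.scalar m (X : ℝ[X])) (S.map (C : ℝ →+* ℝ[X])) :=
        Matrix.scalar_commute _ (fun r' => Commute.all _ r') _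
      rw [← hc.eq, mul_assoc, hmapST, mul_one]
    · rw [RingHom.mapMatrix_apply, RingHom.mapMatrix_apply, Matrix.map_mul, Matrix.map_mul]
  rw [Matrix.charpoly, Matrix.charpoly, hkey, det_mul, det_mul]
  have : det (S.map (C : ℝ →+* ℝ[X])) * det (T.map (C : ℝ →+* ℝ[X])) = 1 := by
    rw [← det_mul, hmapST, det_one]
  calc det (S.map (C : ℝ →+* ℝ[X])) * det (charmatrix F) * det (T.map (C : ℝ →+* ℝ[X]))
      = det (S.map (C : ℝ →+* ℝ[X])) * det (T.map (C : ℝ →+* ℝ[X])) * det (charmatrix F) := by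
        ring
    _ = det (charmatrix F) := by rw [this, one_mul]

private lemma charpoly_zero_aux (n : ℕ) :
    (0 : Matrix (Fin n) (Fin n) ℝ).charpoly = X ^ n := by
  rw [Matrix.charpoly_of_upperTriangular 0 (Matrix.blockTriangular_zero)]
  simp

/-- With `Λ = e^{Ah}`, `Θ = e^{-AΔ} - I`, `F_Δ = [[-ΛΘ, -ΛΘ],[Λ(I+Θ), Λ(I+Θ)]]` and
`T = [[-Θ, -I],[I+Θ, I]]`, we have `T⁻¹ * F_Δ * T = [[Λ, 0],[0, 0]]`; in particular
the characteristic polynomial of `F_Δ` is that of `Λ = e^{Ah}` times `X^n`, i.e. the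
eigenvalues of `F_Δ` are those of `e^{Ah}` together with `n` zeros. -/
theorem similarity_F_Delta {n : ℕ} (A : Matrix (Fin n) (Fin n) ℝ) (h Δ : ℝ)
    (Λ Θ : Matrix (Fin n) (Fin n) ℝ)
    (hΛ : Λ = NormedSpace.exp (h • A)) (hΘ : Θ = NormedSpace.exp ((-Δ) • A) - 1)
    (F T : Matrix (Fin n ⊕ Fin n) (Fin n ⊕ Fin n) ℝ)
    (hF : F = Matrix.fromBlocks (-(Λ * Θ)) (-(Λ * Θ)) (Λ * (1 + Θ)) (Λ * (1 + Θ)))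
    (hT : T = Matrix.fromBlocks (-Θ) (-1) (1 + Θ) 1) :
    T⁻¹ * F * T = Matrix.fromBlocks Λ 0 0 0
      ∧ F.charpoly = Λ.charpoly * X ^ n := by
  -- Λ and Θ commute
  have hcomm : Θ * Λ = Λ * Θ := by
    have hc : Commute ((h : ℝ) • A) ((-Δ : ℝ) • A) :=
      ((Commute.refl A).smul_left h).smul_right (-Δ)
    have hce : Commute Λ (NormedSpace.exp ((-Δ : ℝ) • A)) := by
      rw [hΛ]; exact hc.exp
    have : Commute Λ Θ := by
      rw [hΘ]; exact hce.sub_right (Commute.one_right Λ)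
    exact this.symm
  -- Explicit inverse of T
  set S : Matrix (Fin n ⊕ Fin n) (Fin n ⊕ Fin n) ℝ :=
    Matrix.fromBlocks 1 1 (-(1 + Θ)) (-Θ) with hS
  have hTS : T * S = 1 := by
    rw [hT, hS, Matrix.fromBlocks_multiply, ← Matrix.fromBlocks_one, Matrix.fromBlocks_inj]
    refine ⟨?_, ?_, ?_, ?_⟩ <;> noncomm_ring
  have hST : S * T = 1 := by
    rw [hT, hS, Matrix.fromBlocks_multiply, ← Matrix.fromBlocks_one, Matrix.fromBlocks_inj]
    refine ⟨?_, ?_, ?_, ?_⟩ <;> noncomm_ring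
  have hTinv : T⁻¹ = S := Matrix.inv_eq_right_inv hTS
  -- Compute the conjugation
  have hcomm2 : ∀ M : Matrix (Fin n) (Fin n) ℝ, Θ * (Λ * M) = Λ * (Θ * M) := by
    intro M; rw [← Matrix.mul_assoc, hcomm, Matrix.mul_assoc]
  have hconj : S * F * T = Matrix.fromBlocks Λ 0 0 0 := by
    rw [hF, hT, hS, Matrix.fromBlocks_multiply, Matrix.fromBlocks_multiply,
      Matrix.fromBlocks_inj]
    refine ⟨?_, ?_, ?_, ?_⟩ <;>
      · simp only [Matrix.neg_mul, Matrix.mul_neg, neg_neg, add_mul, Matrix.mul_add, mul_add,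
          one_mul, mul_one, Matrix.mul_assoc, hcomm, hcomm2]
        abel
  refine ⟨by rw [hTinv, hconj], ?_⟩
  have hFc : F.charpoly = (Matrix.fromBlocks Λ (0 : Matrix (Fin n) (Fin n) ℝ)
      (0 : Matrix (Fin n) (Fin n) ℝ) (0 : Matrix (Fin n) (Fin n) ℝ)).charpoly := by
    rw [← hconj]
    exact (charpoly_conj_aux T S F hTS hST).symm
  rw [hFc, Matrix.charpoly_fromBlocks_zero₂₁, charpoly_zero_aux]
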